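/- arXiv:1112.4417 — 4 statements merged into one kernel-verified Lean document; each statement's English description precedes it below -/
import Mathlib

section
/- Let R be the localization of k[x,y] at the maximal ideal (x,y). Then R/(y, y - x^3 + x^2)R has dimension 2 as a k-vector space. -/
open MvPolynomial in
lemma aux_residue (k : Type) [Field k] (p : MvPolynomial (Fin 2) k) :
    ∃ a b : k, p - (C a + C b * X 0) ∈ Ideal.span {X 1, (X 0 : MvPolynomial (Fin 2) k) ^ 2} := by
  induction p using MvPolynomial.induction_on with
  | C a => exact ⟨a, 0, by simp⟩
  | add p q hp hq =>
    obtain ⟨a, b, hp⟩ := hp; obtain ⟨c, d, hq⟩ := hq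
    exact ⟨a + c, b + d, by rw [map_add, map_add]; convert Ideal.add_mem _ hp hq using 1; ring⟩
  | mul_X p i hp =>
    obtain ⟨a, b, hp⟩ := hp
    fin_cases i <;> simp only [Fin.zero_eta, Fin.mk_one, Fin.isValue, map_zero] at *
    · refine ⟨0, a, ?_⟩
      have h1 : (p - (C a + C b * X 0)) * X 0 ∈ Ideal.span {X 1, (X 0 : MvPolynomial (Fin 2) k) ^ 2} :=
        Ideal.mul_mem_right _ _ hp
      have h2 : (C b : MvPolynomial (Fin 2) k) * X 0 ^ 2 ∈ Ideal.span {X 1, (X 0 : MvPolynomial (Fin 2) k) ^ 2} :=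
        Ideal.mul_mem_left _ _ (Ideal.subset_span (by simp))
      convert Ideal.add_mem _ h1 h2 using 1; simp only [C_0]; ring
    · refine ⟨0, 0, ?_⟩
      have h1 : p * X 1 ∈ Ideal.span {X 1, (X 0 : MvPolynomial (Fin 2) k) ^ 2} :=
        Ideal.mul_mem_left _ _ (Ideal.subset_span (by simp))
      convert h1 using 1; simp only [C_0]; ring

open MvPolynomial in
lemma aux_finrank (k : Type) [Field k] :
    Module.finrank k
      (MvPolynomial (Fin 2) k ⧸ Ideal.span {X 1, (X 0 : MvPolynomial (Fin 2) k) ^ 2}) = 2 := by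
  set I2 : Ideal (Polynomial k) := Ideal.span {Polynomial.X ^ 2} with hI2
  let φ : MvPolynomial (Fin 2) k →ₐ[k] (Polynomial k ⧸ I2) :=
    MvPolynomial.aeval ![Ideal.Quotient.mkₐ k I2 Polynomial.X, 0]
  have hφ0 : φ (X 0) = Ideal.Quotient.mkₐ k I2 Polynomial.X := by simp [φ]
  have hφ1 : φ (X 1) = 0 := by simp [φ]
  have hle : Ideal.span {X 1, (X 0 : MvPolynomial (Fin 2) k) ^ 2} ≤ RingHom.ker φ := by
    rw [Ideal.span_le]
    rintro q hq
    simp only [Set.mem_insert_iff, Set.mem_singleton_iff] at hq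
    rcases hq with rfl | rfl
    · simpa [RingHom.mem_ker] using hφ1
    · simp only [SetLike.mem_coe, RingHom.mem_ker, map_pow, hφ0]
      rw [← map_pow, Ideal.Quotient.mkₐ_eq_mk, Ideal.Quotient.eq_zero_iff_mem]
      exact Ideal.subset_span rfl
  have hsurj : Function.Surjective φ := by
    intro t
    obtain ⟨q, rfl⟩ := Ideal.Quotient.mk_surjective t
    refine ⟨Polynomial.aeval (X 0 : MvPolynomial (Fin 2) k) q, ?_⟩
    rw [← Polynomial.aeval_algHom_apply φ _ q, hφ0,
      Polynomial.aeval_algHom_apply (Ideal.Quotient.mkₐ k I2) _ q]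
    simp
  have hker : RingHom.ker φ = Ideal.span {X 1, (X 0 : MvPolynomial (Fin 2) k) ^ 2} := by
    refine le_antisymm ?_ hle
    intro p hp
    obtain ⟨a, b, hab⟩ := aux_residue k p
    have hmem : φ (p - (C a + C b * X 0)) = 0 := hle hab
    rw [map_sub, RingHom.mem_ker.mp hp, zero_sub, neg_eq_zero, map_add, map_mul, hφ0,
      MvPolynomial.algHom_C, MvPolynomial.algHom_C] at hmem
    have : Ideal.Quotient.mk I2 (Polynomial.C a + Polynomial.C b * Polynomial.X) = 0 := by
      simpa [Ideal.Quotient.mkₐ_eq_mk, Ideal.Quotient.algebraMap_eq, ← Ideal.Quotient.mk_algebraMap, Polynomial.algebraMap_eq] using hmem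
    rw [Ideal.Quotient.eq_zero_iff_mem, hI2, Ideal.mem_span_singleton] at this
    have hzero : (Polynomial.C a + Polynomial.C b * Polynomial.X : Polynomial k) = 0 := by
      by_contra h
      have := Polynomial.eq_zero_of_dvd_of_degree_lt this ?_
      · exact h this
      · calc (Polynomial.C a + Polynomial.C b * Polynomial.X : Polynomial k).degree
            ≤ 1 := by
              refine le_trans (Polynomial.degree_add_le _ _) ?_
              simp only [sup_le_iff]
              constructor
              · exact le_trans Polynomial.degree_C_le (by norm_num)
              · exact Polynomial.degree_C_mul_X_le _
          _ < (Polynomial.X ^ 2 : Polynomial k).degree := by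
              rw [Polynomial.degree_X_pow]; norm_num
    have ha : a = 0 := by
      have := congrArg (fun q => Polynomial.coeff q 0) hzero; simpa using this
    have hb : b = 0 := by
      have := congrArg (fun q => Polynomial.coeff q 1) hzero; simpa using this
    have := hab
    rw [ha, hb] at this
    simpa using this
  have e : (MvPolynomial (Fin 2) k ⧸ Ideal.span {X 1, (X 0 : MvPolynomial (Fin 2) k) ^ 2})
      ≃ₐ[k] (Polynomial k ⧸ I2) := hker ▸ Ideal.quotientKerAlgEquivOfSurjective hsurj
  rw [e.toLinearEquiv.finrank_eq]
  have : Module.finrank k (AdjoinRoot (Polynomial.X ^ 2 : Polynomial k)) = 2 := by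
    rw [PowerBasis.finrank (AdjoinRoot.powerBasis (by
      intro h; simpa using congrArg Polynomial.natDegree h))]
    simp [AdjoinRoot.powerBasis]
  exact this

open MvPolynomial in
/-- If `R` is the localization of `k[x,y]` at the maximal ideal `(x,y)`, then
`R/(y, y - x³ + x²)R` has dimension `2` as a `k`-vector space. -/
theorem stmt_2 (k : Type) [Field k] (P : Ideal (MvPolynomial (Fin 2) k)) [P.IsPrime]
    (hPmax : P.IsMaximal)
    (hP : P = Ideal.span {MvPolynomial.X 0, MvPolynomial.X 1}) :
    Module.finrank k
      (Localization.AtPrime P ⧸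
        Ideal.map (algebraMap (MvPolynomial (Fin 2) k) (Localization.AtPrime P))
          (Ideal.span {MvPolynomial.X 1,
            MvPolynomial.X 1 - MvPolynomial.X 0 ^ 3 + MvPolynomial.X 0 ^ 2})) = 2 := by
  classical
  set A := MvPolynomial (Fin 2) k
  set S := Localization.AtPrime P
  set f : A →+* S := algebraMap A S with hf
  set J' : Ideal A := Ideal.span {X 1, (X 0 : A) ^ 2} with hJ'
  set B := A ⧸ J' with hB
  set g : A →+* B := Ideal.Quotient.mk J' with hg
  -- spans in A
  have hspan : (Ideal.span {X 1, X 1 - X 0 ^ 3 + X 0 ^ 2} : Ideal A)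
      = Ideal.span {X 1, (X 0 : A) ^ 2 - X 0 ^ 3} := by
    apply le_antisymm <;> rw [Ideal.span_le] <;> rintro q hq <;>
      simp only [Set.mem_insert_iff, Set.mem_singleton_iff] at hq <;>
      rcases hq with rfl | rfl
    · exact Ideal.subset_span (by simp)
    · exact Ideal.mem_span_pair.mpr ⟨1, 1, by ring⟩
    · exact Ideal.subset_span (by simp)
    · exact Ideal.mem_span_pair.mpr ⟨-1, 1, by ring⟩
  have hX0 : (X 0 : A) ∈ P := hP ▸ Ideal.subset_span (by simp)
  have hX1 : (X 1 : A) ∈ P := hP ▸ Ideal.subset_span (by simp)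
  have hu : (1 : A) - X 0 ∈ P.primeCompl := by
    intro h
    have : (1 : A) ∈ P := by simpa using P.add_mem h hX0
    exact hPmax.ne_top (Ideal.eq_top_iff_one P |>.mpr this)
  have hunit : IsUnit (f (1 - X 0)) := IsLocalization.map_units S ⟨_, hu⟩
  have hmap : Ideal.map f (Ideal.span {X 1, (X 0 : A) ^ 2 - X 0 ^ 3})
      = Ideal.map f J' := by
    rw [hJ', Ideal.map_span, Ideal.map_span, Set.image_insert_eq, Set.image_singleton,
      Set.image_insert_eq, Set.image_singleton]
    apply le_antisymm <;> rw [Ideal.span_le] <;> rintro q hq <;>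
      simp only [Set.mem_insert_iff, Set.mem_singleton_iff] at hq <;>
      rcases hq with rfl | rfl
    · exact Ideal.subset_span (by simp)
    · refine Ideal.mem_span_pair.mpr ⟨0, f (1 - X 0), ?_⟩
      rw [← map_mul, zero_mul, zero_add]; congr 1; ring
    · exact Ideal.subset_span (by simp)
    · refine Ideal.mem_span_pair.mpr ⟨0, ↑hunit.unit⁻¹, ?_⟩
      rw [zero_mul, zero_add]
      have : f ((X 0 : A) ^ 2 - X 0 ^ 3) = f (1 - X 0) * f ((X 0 : A) ^ 2) := by
        rw [← map_mul]; congr 1; ring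
      rw [this, ← mul_assoc, IsUnit.val_inv_mul, one_mul]
  -- J' ⊆ P
  have hJ'P : J' ≤ P := by
    rw [hJ', Ideal.span_le]
    rintro q hq
    simp only [Set.mem_insert_iff, Set.mem_singleton_iff] at hq
    rcases hq with rfl | rfl
    · exact hX1
    · exact P.pow_mem_of_mem hX0 2 (by norm_num)
  -- all images of primeCompl are units in B
  have hunits : Submonoid.map g P.primeCompl ≤ IsUnit.submonoid B := by
    rintro b ⟨a, ha, rfl⟩
    by_contra hna
    obtain ⟨m, hm, ham⟩ := exists_max_ideal_of_mem_nonunits hna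
    haveI : m.IsPrime := hm.isPrime
    have hker : J' ≤ Ideal.comap g m := by
      intro j hj
      simp only [Ideal.mem_comap, hg, Ideal.Quotient.eq_zero_iff_mem.mpr hj]
      exact m.zero_mem
    have hX0m : (X 0 : A) ∈ Ideal.comap g m := by
      have h2 : (X 0 : A) ^ 2 ∈ Ideal.comap g m := hker (Ideal.subset_span (by simp))
      exact (Ideal.IsPrime.pow_mem_iff_mem inferInstance 2 (by norm_num)).mp h2
    have hX1m : (X 1 : A) ∈ Ideal.comap g m := hker (Ideal.subset_span (by simp))
    have hPm : P ≤ Ideal.comap g m := by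
      rw [hP, Ideal.span_le]
      rintro q hq
      simp only [Set.mem_insert_iff, Set.mem_singleton_iff] at hq
      rcases hq with rfl | rfl
      · exact hX0m
      · exact hX1m
    have : Ideal.comap g m = P :=
      ((hPmax.eq_of_le (Ideal.IsPrime.ne_top inferInstance) hPm)).symm
    exact ha (this ▸ Ideal.mem_comap.mpr ham)
  haveI hloc : IsLocalization (Submonoid.map g P.primeCompl) B :=
    IsLocalization.at_units hunits
  -- the induced map S → B
  set F : S →+* B := IsLocalization.map (M := P.primeCompl) B g
      (Submonoid.le_comap_map P.primeCompl) with hF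
  have hFalg : ∀ a : A, F (f a) = g a := fun a => IsLocalization.map_eq _ a
  have hFsurj : Function.Surjective F := by
    intro b
    obtain ⟨a, rfl⟩ := Ideal.Quotient.mk_surjective b
    exact ⟨f a, hFalg a⟩
  have hFker : RingHom.ker F = Ideal.map f J' := by
    rw [hF, IsLocalization.ker_map (T := Submonoid.map g P.primeCompl) B g rfl]
    congr 1
    rw [hg, Ideal.mk_ker]
  have hcomm : ∀ c : k, F (algebraMap k S c) = algebraMap k B c := by
    intro c
    rw [IsScalarTower.algebraMap_apply k A S, hFalg, hg, ← Ideal.Quotient.algebraMap_eq, ← IsScalarTower.algebraMap_apply k A B]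
  set Fa : S →ₐ[k] B := { F with commutes' := hcomm } with hFa
  have hFaker : RingHom.ker Fa = Ideal.map f J' := hFker
  have hFasurj : Function.Surjective Fa := hFsurj
  have e : (S ⧸ Ideal.map f J') ≃ₐ[k] B :=
    hFaker ▸ Ideal.quotientKerAlgEquivOfSurjective hFasurj
  rw [hspan, hmap, e.toLinearEquiv.finrank_eq]
  exact aux_finrank k
end

section
/- Let R be the localization of k[x,y] at the maximal ideal (x-1, y). Then R/(y, y - x^3 + x^2)R has dimension 1 as a k-vector space. -/
open MvPolynomial

/-- If `R` is the localization of `k[x,y]` at the maximal ideal `(x-1, y)`, then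
`R/(y, y - x³ + x²)R` has dimension `1` as a `k`-vector space. -/
theorem stmt_3 (k : Type) [Field k] (P : Ideal (MvPolynomial (Fin 2) k)) [P.IsPrime]
    (hPmax : P.IsMaximal)
    (hP : P = Ideal.span {MvPolynomial.X 0 - 1, MvPolynomial.X 1}) :
    Module.finrank k
      (Localization.AtPrime P ⧸
        Ideal.map (algebraMap (MvPolynomial (Fin 2) k) (Localization.AtPrime P))
          (Ideal.span {MvPolynomial.X 1,
            MvPolynomial.X 1 - MvPolynomial.X 0 ^ 3 + MvPolynomial.X 0 ^ 2})) = 1 := by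
  classical
  set c : Fin 2 → k := ![1, 0] with hc
  set I : Ideal (MvPolynomial (Fin 2) k) := Ideal.span {MvPolynomial.X 1,
    MvPolynomial.X 1 - MvPolynomial.X 0 ^ 3 + MvPolynomial.X 0 ^ 2} with hI
  -- Step A: P is the vanishing ideal of the point (1,0)
  have hPV : P = MvPolynomial.vanishingIdeal k {c} := by
    apply hPmax.eq_of_le (Ideal.IsMaximal.ne_top inferInstance)
    rw [hP, Ideal.span_le]
    rintro p hp
    simp only [Set.mem_insert_iff, Set.mem_singleton_iff] at hp
    rcases hp with rfl | rfl <;>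
      · rw [SetLike.mem_coe, MvPolynomial.mem_vanishingIdeal_singleton_iff]
        simp [hc]
  have hX01 : MvPolynomial.X (R := k) (σ := Fin 2) 0 - 1 ∈ P :=
    hP ▸ Ideal.subset_span (Set.mem_insert _ _)
  have hX1 : MvPolynomial.X (R := k) (σ := Fin 2) 1 ∈ P :=
    hP ▸ Ideal.subset_span (Set.mem_insert_of_mem _ rfl)
  have hX0 : MvPolynomial.X (R := k) (σ := Fin 2) 0 ∉ P := by
    rw [hPV, MvPolynomial.mem_vanishingIdeal_singleton_iff]
    simp [hc]
  set R := Localization.AtPrime P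
  set f := algebraMap (MvPolynomial (Fin 2) k) R with hf
  have ha : IsUnit (f (MvPolynomial.X 0)) :=
    IsLocalization.map_units R (⟨_, hX0⟩ : P.primeCompl)
  obtain ⟨u, hu⟩ := (ha.pow 2).exists_left_inv
  have hgen2 : f (MvPolynomial.X 0 - 1)
      = u * (f (MvPolynomial.X 1)
        - f (MvPolynomial.X 1 - MvPolynomial.X 0 ^ 3 + MvPolynomial.X 0 ^ 2)) := by
    simp only [map_sub, map_add, map_one, map_pow]
    have h3 : f (MvPolynomial.X 0) - 1
        = u * (f (MvPolynomial.X 0) ^ 2 * (f (MvPolynomial.X 0) - 1)) := by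
      rw [← mul_assoc, hu, one_mul]
    rw [h3]; ring
  -- Step B: the two ideals have the same image
  have hmap : Ideal.map f I = Ideal.map f P := by
    apply le_antisymm
    · rw [hI, Ideal.map_le_iff_le_comap, Ideal.span_le]
      rintro p hp
      simp only [Set.mem_insert_iff, Set.mem_singleton_iff] at hp
      rcases hp with rfl | rfl
      · exact Ideal.mem_map_of_mem f hX1
      · rw [SetLike.mem_coe, Ideal.mem_comap]
        have h1 : f (MvPolynomial.X 1 - MvPolynomial.X 0 ^ 3 + MvPolynomial.X 0 ^ 2)
            = f (MvPolynomial.X 1) - f (MvPolynomial.X 0) ^ 2 * f (MvPolynomial.X 0 - 1) := by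
          simp only [map_sub, map_add, map_one, map_pow]
          ring
        rw [h1]
        exact sub_mem (Ideal.mem_map_of_mem f hX1)
          (Ideal.mul_mem_left _ _ (Ideal.mem_map_of_mem f hX01))
    · rw [Ideal.map_le_iff_le_comap]
      refine (le_of_eq hP).trans (Ideal.span_le.mpr ?_)
      rintro p hp
      simp only [Set.mem_insert_iff, Set.mem_singleton_iff] at hp
      have m1 : f (MvPolynomial.X 1) ∈ Ideal.map f I :=
        Ideal.mem_map_of_mem f (Ideal.subset_span (Set.mem_insert _ _))
      have m2 : f (MvPolynomial.X 1 - MvPolynomial.X 0 ^ 3 + MvPolynomial.X 0 ^ 2)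
          ∈ Ideal.map f I :=
        Ideal.mem_map_of_mem f (Ideal.subset_span (Set.mem_insert_of_mem _ rfl))
      rcases hp with rfl | rfl
      · rw [SetLike.mem_coe, Ideal.mem_comap, hgen2]
        exact Ideal.mul_mem_left _ _ (sub_mem m1 m2)
      · exact m1
  rw [hmap]
  -- Step C: the lift of evaluation at c to the localization
  have hunit : ∀ s : P.primeCompl,
      IsUnit (MvPolynomial.eval c (s : MvPolynomial (Fin 2) k)) := by
    rintro ⟨s, hs⟩
    rw [isUnit_iff_ne_zero]
    intro h0
    exact hs ((hPV ▸ (MvPolynomial.mem_vanishingIdeal_singleton_iff c s).mpr h0))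
  set ψ : R →+* k := IsLocalization.lift (M := P.primeCompl) (S := R)
    (g := MvPolynomial.eval c) hunit with hψ
  have hψf : ∀ p, ψ (f p) = MvPolynomial.eval c p := by
    intro p
    rw [hψ, hf, IsLocalization.lift_eq]
  have hsurj : Function.Surjective ψ := fun x =>
    ⟨f (MvPolynomial.C x), by rw [hψf, MvPolynomial.eval_C]⟩
  have hker : Ideal.map f P = RingHom.ker ψ := by
    apply le_antisymm
    · rw [Ideal.map_le_iff_le_comap]
      intro p hp
      rw [Ideal.mem_comap, RingHom.mem_ker, hψf]
      exact (MvPolynomial.mem_vanishingIdeal_singleton_iff c p).mp (hPV ▸ hp)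
    · have hmax : (Ideal.map f P).IsMaximal := by
        rw [hf, Localization.AtPrime.map_eq_maximalIdeal]
        exact IsLocalRing.maximalIdeal.isMaximal _
      have hne : RingHom.ker ψ ≠ ⊤ := by
        rw [Ne, Ideal.eq_top_iff_one, RingHom.mem_ker, map_one]
        exact one_ne_zero
      exact le_of_eq (hmax.eq_of_le hne (by
        rw [Ideal.map_le_iff_le_comap]
        intro p hp
        rw [Ideal.mem_comap, RingHom.mem_ker, hψf]
        exact (MvPolynomial.mem_vanishingIdeal_singleton_iff c p).mp (hPV ▸ hp))).symm
  -- Step D: the algebra equivalence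
  let e : (R ⧸ Ideal.map f P) ≃+* k :=
    (Ideal.quotEquivOfEq hker).trans (RingHom.quotientKerEquivOfSurjective hsurj)
  have he : ∀ x : k, e (algebraMap k (R ⧸ Ideal.map f P) x) = x := by
    intro x
    have h4 : algebraMap k (R ⧸ Ideal.map f P) x
        = Ideal.Quotient.mk (Ideal.map f P) (f (MvPolynomial.C x)) := by
      rw [IsScalarTower.algebraMap_apply k (MvPolynomial (Fin 2) k) (R ⧸ Ideal.map f P),
        IsScalarTower.algebraMap_apply (MvPolynomial (Fin 2) k) R (R ⧸ Ideal.map f P)]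
      rfl
    rw [h4]
    show ψ (f (MvPolynomial.C x)) = x
    rw [hψf, MvPolynomial.eval_C]
  let eAlg : (R ⧸ Ideal.map f P) ≃ₐ[k] k :=
    { e with commutes' := fun x => by simpa using he x }
  rw [eAlg.toLinearEquiv.finrank_eq, Module.finrank_self]
end

section
/- In the polynomial ring R = k[x,y,z,w], with I = (xz, xw, yz, yw) and J = (x - z, y - w), the quotient R_m/(I + J)R_m, where m = (x,y,z,w), has dimension 3 as a k-vector space. -/
open MvPolynomial TrivSqZeroExt

set_option maxHeartbeats 1000000 in
/-- In `R = k[x,y,z,w]` with `I = (xz,xw,yz,yw)`, `J = (x-z, y-w)` and `m = (x,y,z,w)`,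
the quotient `R_m/(I+J)R_m` has dimension `3` as a `k`-vector space. -/
theorem stmt_4 (k : Type) [Field k] (P : Ideal (MvPolynomial (Fin 4) k)) [P.IsPrime]
    (hPmax : P.IsMaximal)
    (hP : P = Ideal.span {X 0, X 1, X 2, X 3})
    (I J : Ideal (MvPolynomial (Fin 4) k))
    (hI : I = Ideal.span {X 0 * X 2, X 0 * X 3, X 1 * X 2, X 1 * X 3})
    (hJ : J = Ideal.span {X 0 - X 2, X 1 - X 3}) :
    Module.finrank k
      (Localization.AtPrime P ⧸
        Ideal.map (algebraMap (MvPolynomial (Fin 4) k) (Localization.AtPrime P)) (I + J)) = 3 := by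
  classical
  set R := MvPolynomial (Fin 4) k with hR
  set T := TrivSqZeroExt k (k × k) with hT
  set L := Localization.AtPrime P with hL
  set K := Ideal.map (algebraMap R L) (I + J) with hK
  set v : Fin 4 → T := ![.inr (1,0), .inr (0,1), .inr (1,0), .inr (0,1)] with hv
  set f0 : R →ₐ[k] T := aeval v with hf0
  -- membership facts
  have hIJ0 : (X 0 : R) * X 2 ∈ I + J := by
    rw [hI]; exact Ideal.mem_sup_left (Ideal.subset_span (by simp))
  have hIJ1 : (X 0 : R) * X 3 ∈ I + J := by
    rw [hI]; exact Ideal.mem_sup_left (Ideal.subset_span (by simp))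
  have hIJ2 : (X 1 : R) * X 2 ∈ I + J := by
    rw [hI]; exact Ideal.mem_sup_left (Ideal.subset_span (by simp))
  have hIJ3 : (X 1 : R) * X 3 ∈ I + J := by
    rw [hI]; exact Ideal.mem_sup_left (Ideal.subset_span (by simp))
  have hIJ4 : (X 0 : R) - X 2 ∈ I + J := by
    rw [hJ]; exact Ideal.mem_sup_right (Ideal.subset_span (by simp))
  have hIJ5 : (X 1 : R) - X 3 ∈ I + J := by
    rw [hJ]; exact Ideal.mem_sup_right (Ideal.subset_span (by simp))
  have hxxm : (X 0 : R) * X 0 ∈ I + J := by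
    have h : (X 0 : R) * X 0 = X 0 * X 2 + X 0 * (X 0 - X 2) := by ring
    rw [h]; exact add_mem hIJ0 (Ideal.mul_mem_left _ _ hIJ4)
  have hxym : (X 0 : R) * X 1 ∈ I + J := by
    have h : (X 0 : R) * X 1 = X 0 * X 3 + X 0 * (X 1 - X 3) := by ring
    rw [h]; exact add_mem hIJ1 (Ideal.mul_mem_left _ _ hIJ5)
  have hyym : (X 1 : R) * X 1 ∈ I + J := by
    have h : (X 1 : R) * X 1 = X 1 * X 3 + X 1 * (X 1 - X 3) := by ring
    rw [h]; exact add_mem hIJ3 (Ideal.mul_mem_left _ _ hIJ5)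
  have hv0 : f0 (X 0) = TrivSqZeroExt.inr ((1:k),(0:k)) := by rw [hf0, aeval_X]; rfl
  have hv1 : f0 (X 1) = TrivSqZeroExt.inr ((0:k),(1:k)) := by rw [hf0, aeval_X]; rfl
  have hv2 : f0 (X 2) = TrivSqZeroExt.inr ((1:k),(0:k)) := by rw [hf0, aeval_X]; rfl
  have hv3 : f0 (X 3) = TrivSqZeroExt.inr ((0:k),(1:k)) := by rw [hf0, aeval_X]; rfl
  -- constant coefficient of the evaluation
  have hfst : ∀ p : R, fst (f0 p) = constantCoeff p := by
    intro p
    have hc : (fstHom k k (k × k)).comp f0 = aeval (fun _ => 0) := by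
      rw [hf0, MvPolynomial.comp_aeval]
      congr 1
      funext i
      fin_cases i <;> simp [hv]
    calc fst (f0 p) = ((fstHom k k (k × k)).comp f0) p := rfl
      _ = constantCoeff p := by rw [hc, aeval_zero']; simp
  have hunit : ∀ s : P.primeCompl, IsUnit (f0 s) := by
    rintro ⟨s, hs⟩
    rw [isUnit_iff_isUnit_fst, hfst, isUnit_iff_ne_zero]
    intro h0
    refine hs (show s ∈ P from ?_)
    rw [hP]
    have himg : ({X 0, X 1, X 2, X 3} : Set R) = MvPolynomial.X '' Set.univ := by
      ext p
      constructor
      · rintro (rfl | rfl | rfl | rfl)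
        exacts [⟨0, trivial, rfl⟩, ⟨1, trivial, rfl⟩, ⟨2, trivial, rfl⟩, ⟨3, trivial, rfl⟩]
      · rintro ⟨i, -, rfl⟩
        fin_cases i <;> simp
    rw [himg, mem_ideal_span_X_image]
    intro m hm
    have hmne : m ≠ 0 := by
      rintro rfl
      exact (MvPolynomial.mem_support_iff.mp hm) h0
    obtain ⟨i, hi⟩ := Finsupp.ne_iff.mp hmne
    exact ⟨i, trivial, by simpa using hi⟩
  set f : L →ₐ[k] T := IsLocalization.liftAlgHom (M := P.primeCompl) hunit with hf
  have hfalg : ∀ p : R, f (algebraMap R L p) = f0 p := fun p => IsLocalization.lift_eq _ _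
  have hker0 : ∀ p ∈ I + J, f0 p = 0 := by
    have : I + J ≤ RingHom.ker (f0 : R →+* T) := by
      rw [hI, hJ]
      apply sup_le
      · rw [Ideal.span_le]
        rintro p hp
        simp only [Set.mem_insert_iff, Set.mem_singleton_iff] at hp
        rcases hp with rfl | rfl | rfl | rfl
        · show f0 (X 0 * X 2) = 0
          rw [map_mul, hv0, hv2]; exact TrivSqZeroExt.inr_mul_inr k _ _
        · show f0 (X 0 * X 3) = 0
          rw [map_mul, hv0, hv3]; exact TrivSqZeroExt.inr_mul_inr k _ _
        · show f0 (X 1 * X 2) = 0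
          rw [map_mul, hv1, hv2]; exact TrivSqZeroExt.inr_mul_inr k _ _
        · show f0 (X 1 * X 3) = 0
          rw [map_mul, hv1, hv3]; exact TrivSqZeroExt.inr_mul_inr k _ _
      · rw [Ideal.span_le]
        rintro p hp
        simp only [Set.mem_insert_iff, Set.mem_singleton_iff] at hp
        rcases hp with rfl | rfl
        · show f0 (X 0 - X 2) = 0
          rw [map_sub, hv0, hv2, sub_self]
        · show f0 (X 1 - X 3) = 0
          rw [map_sub, hv1, hv3, sub_self]
    intro p hp
    exact this hp
  have hker : ∀ a ∈ K, f a = 0 := by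
    have : K ≤ RingHom.ker (f : L →+* T) := by
      rw [hK, Ideal.map_le_iff_le_comap]
      intro p hp
      simp only [Ideal.mem_comap, RingHom.mem_ker, RingHom.coe_coe, hfalg]
      exact hker0 p hp
    intro a ha
    exact this ha
  set fbar : (L ⧸ K) →ₐ[k] T := Ideal.Quotient.liftₐ K f hker with hfbar
  -- the inverse
  set xq : L ⧸ K := Ideal.Quotient.mk K (algebraMap R L (X 0)) with hxq
  set yq : L ⧸ K := Ideal.Quotient.mk K (algebraMap R L (X 1)) with hyq
  have hmkz : ∀ p ∈ I + J, Ideal.Quotient.mk K (algebraMap R L p) = 0 := by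
    intro p hp
    rw [Ideal.Quotient.eq_zero_iff_mem]
    exact Ideal.mem_map_of_mem _ hp
  have hmulmk : ∀ p q : R, (Ideal.Quotient.mk K (algebraMap R L p)) *
      (Ideal.Quotient.mk K (algebraMap R L q)) =
      Ideal.Quotient.mk K (algebraMap R L (p * q)) := by
    intro p q
    rw [map_mul, map_mul]
  have hxx : xq * xq = 0 := by
    rw [hxq, hmulmk]; exact hmkz _ hxxm
  have hxy : xq * yq = 0 := by
    rw [hxq, hyq, hmulmk]; exact hmkz _ hxym
  have hyxm : (X 1 : R) * X 0 ∈ I + J := by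
    have h : (X 1 : R) * X 0 = X 1 * X 2 + X 1 * (X 0 - X 2) := by ring
    rw [h]; exact add_mem hIJ2 (Ideal.mul_mem_left _ _ hIJ4)
  have hyx : yq * xq = 0 := by
    rw [hyq, hxq, hmulmk]; exact hmkz _ hyxm
  have hyy : yq * yq = 0 := by
    rw [hyq, hmulmk]; exact hmkz _ hyym
  set g0 : (k × k) →ₗ[k] (L ⧸ K) :=
    LinearMap.smulRight (LinearMap.fst k k k) xq + LinearMap.smulRight (LinearMap.snd k k k) yq
    with hg0
  have hg0apply : ∀ m : k × k, g0 m = m.1 • xq + m.2 • yq := fun m => rfl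
  have hg : ∀ x y : k × k, g0 x * g0 y = 0 := by
    intro x y
    rw [hg0apply, hg0apply]
    simp only [add_mul, mul_add, smul_mul_assoc, mul_smul_comm, hxx, hxy, hyx, hyy,
      smul_zero, add_zero]
  have hfg : ∀ (r : k) (x : k × k), g0 (r • x) = (Algebra.ofId k (L ⧸ K)) r * g0 x := by
    intro r x
    rw [g0.map_smul]
    exact Algebra.smul_def r (g0 x)
  have hgf : ∀ (r : k) (x : k × k), g0 (MulOpposite.op r • x) = g0 x * (Algebra.ofId k (L ⧸ K)) r := by
    intro r x
    rw [op_smul_eq_smul, g0.map_smul]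
    exact (Algebra.smul_def r (g0 x)).trans (mul_comm ((algebraMap k (L ⧸ K)) r) (g0 x))
  set g : T →ₐ[k] (L ⧸ K) := TrivSqZeroExt.lift (Algebra.ofId k (L ⧸ K)) g0 hg hfg hgf with hg'
  -- key evaluations
  have hfbarmk : ∀ p : R, fbar (Ideal.Quotient.mk K (algebraMap R L p)) = f0 p := by
    intro p
    rw [hfbar, Ideal.Quotient.liftₐ_apply]
    exact (Ideal.Quotient.lift_mk K _ _).trans (hfalg p)
  have hx02 : Ideal.Quotient.mk K (algebraMap R L (X 2)) = xq := by
    rw [hxq, Ideal.Quotient.mk_eq_mk_iff_sub_mem]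
    rw [← map_sub]
    exact Ideal.mem_map_of_mem _ (by
      have h : (X 2 : R) - X 0 = -(X 0 - X 2) := by ring
      rw [h]; exact neg_mem hIJ4)
  have hx13 : Ideal.Quotient.mk K (algebraMap R L (X 3)) = yq := by
    rw [hyq, Ideal.Quotient.mk_eq_mk_iff_sub_mem]
    rw [← map_sub]
    exact Ideal.mem_map_of_mem _ (by
      have h : (X 3 : R) - X 1 = -(X 1 - X 3) := by ring
      rw [h]; exact neg_mem hIJ5)
  -- compositions
  have hginr : ∀ m : k × k, g (.inr m) = m.1 • xq + m.2 • yq := by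
    intro m
    rw [hg', TrivSqZeroExt.lift_apply_inr]
    exact hg0apply m
  have hcomp2 : fbar.comp g = AlgHom.id k T := by
    apply TrivSqZeroExt.algHom_ext
    intro m
    rw [AlgHom.comp_apply, hginr, map_add, map_smul, map_smul, AlgHom.id_apply]
    rw [hxq, hyq, hfbarmk, hfbarmk]
    rw [hv0, hv1, ← TrivSqZeroExt.inr_smul, ← TrivSqZeroExt.inr_smul, ← TrivSqZeroExt.inr_add]
    congr 1
    simp [Prod.ext_iff]
  have hcomp1 : g.comp fbar = AlgHom.id k (L ⧸ K) := by
    apply Ideal.Quotient.algHom_ext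
    apply AlgHom.coe_ringHom_injective
    apply IsLocalization.ringHom_ext (M := P.primeCompl)
    apply MvPolynomial.ringHom_ext
    · intro r
      show g (fbar (Ideal.Quotient.mk K (algebraMap R L (C r)))) =
        Ideal.Quotient.mk K (algebraMap R L (C r))
      have h1 : algebraMap R L (C r) = algebraMap k L r := by
        rw [← MvPolynomial.algebraMap_eq, ← IsScalarTower.algebraMap_apply]
      have h2 : Ideal.Quotient.mk K (algebraMap k L r) = algebraMap k (L ⧸ K) r := by
        rw [IsScalarTower.algebraMap_apply k L (L ⧸ K)]
        rfl
      rw [h1, h2, fbar.commutes, g.commutes]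
    · intro i
      show g (fbar (Ideal.Quotient.mk K (algebraMap R L (X i)))) =
        Ideal.Quotient.mk K (algebraMap R L (X i))
      rw [hfbarmk]
      fin_cases i
      · show g (f0 (X 0)) = Ideal.Quotient.mk K (algebraMap R L (X 0))
        rw [hv0, hginr]; simp [hxq]
      · show g (f0 (X 1)) = Ideal.Quotient.mk K (algebraMap R L (X 1))
        rw [hv1, hginr]; simp [hyq]
      · show g (f0 (X 2)) = Ideal.Quotient.mk K (algebraMap R L (X 2))
        rw [hv2, hginr, hx02]; simp
      · show g (f0 (X 3)) = Ideal.Quotient.mk K (algebraMap R L (X 3))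
        rw [hv3, hginr, hx13]; simp
  set e : (L ⧸ K) ≃ₐ[k] T := AlgEquiv.ofAlgHom fbar g hcomp2 hcomp1 with he
  rw [e.toLinearEquiv.finrank_eq]
  have : Module.finrank k T = Module.finrank k (k × (k × k)) := rfl
  rw [this, Module.finrank_prod, Module.finrank_prod, Module.finrank_self]
end

section
/- The kernel of the k-algebra homomorphism k[x,y,z,w] → k[s,t] sending x ↦ s^4, y ↦ s^3 t, z ↦ s t^3, w ↦ t^4 is the ideal generated by yz − xw, z^3 − yw^2, xz^2 − y^2 w, and y^3 − x^2 z. -/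
open MvPolynomial

/-- exponent map: image of a monomial. -/
noncomputable def ee (m : Fin 4 →₀ ℕ) : Fin 2 →₀ ℕ :=
  Finsupp.single 0 (4 * m 0 + 3 * m 1 + m 2) + Finsupp.single 1 (m 1 + 3 * m 2 + 4 * m 3)

/-- standard (reduced) monomials -/
def Std (m : Fin 4 →₀ ℕ) : Prop :=
  m 1 ≤ 2 ∧ m 2 ≤ 2 ∧ (m 1 = 0 ∨ m 2 = 0) ∧ (m 0 = 0 ∨ m 2 ≤ 1)

lemma ee_apply0 (m : Fin 4 →₀ ℕ) : ee m 0 = 4 * m 0 + 3 * m 1 + m 2 := by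
  simp [ee, Finsupp.single_apply]

lemma ee_apply1 (m : Fin 4 →₀ ℕ) : ee m 1 = m 1 + 3 * m 2 + 4 * m 3 := by
  simp [ee, Finsupp.single_apply]

lemma ee_eq_iff {m m' : Fin 4 →₀ ℕ} :
    ee m = ee m' ↔ (4 * m 0 + 3 * m 1 + m 2 = 4 * m' 0 + 3 * m' 1 + m' 2 ∧
      m 1 + 3 * m 2 + 4 * m 3 = m' 1 + 3 * m' 2 + 4 * m' 3) := by
  constructor
  · intro h
    constructor
    · rw [← ee_apply0, ← ee_apply0, h]
    · rw [← ee_apply1, ← ee_apply1, h]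
  · rintro ⟨h0, h1⟩
    unfold ee
    rw [h0, h1]

lemma ee_inj_aux (a b c d a' b' c' d' : ℕ)
    (h1 : b ≤ 2) (h2 : c ≤ 2) (h3 : b = 0 ∨ c = 0) (h4 : a = 0 ∨ c ≤ 1)
    (h1' : b' ≤ 2) (h2' : c' ≤ 2) (h3' : b' = 0 ∨ c' = 0) (h4' : a' = 0 ∨ c' ≤ 1)
    (e1 : 4*a+3*b+c = 4*a'+3*b'+c') (e2 : b+3*c+4*d = b'+3*c'+4*d') :
    a = a' ∧ b = b' ∧ c = c' ∧ d = d' := by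
  interval_cases b <;> interval_cases b' <;> interval_cases c <;> interval_cases c' <;> omega

lemma ee_inj {m m' : Fin 4 →₀ ℕ} (h : Std m) (h' : Std m') (hee : ee m = ee m') :
    m = m' := by
  rw [ee_eq_iff] at hee
  obtain ⟨hm1, hm2, hm3, hm4⟩ := h
  obtain ⟨hm1', hm2', hm3', hm4'⟩ := h'
  have h0 := ee_inj_aux (m 0) (m 1) (m 2) (m 3) (m' 0) (m' 1) (m' 2) (m' 3)
    hm1 hm2 hm3 hm4 hm1' hm2' hm3' hm4' hee.1 hee.2
  ext j
  fin_cases j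
  · exact h0.1
  · exact h0.2.1
  · exact h0.2.2.1
  · exact h0.2.2.2

variable (k : Type) [Field k]

noncomputable abbrev vv : Fin 4 → MvPolynomial (Fin 2) k :=
  ![(X 0) ^ 4, (X 0) ^ 3 * X 1, X 0 * (X 1) ^ 3, (X 1) ^ 4]

noncomputable abbrev Sgen : Set (MvPolynomial (Fin 4) k) :=
  {X 1 * X 2 - X 0 * X 3, (X 2) ^ 3 - X 1 * (X 3) ^ 2,
    X 0 * (X 2) ^ 2 - (X 1) ^ 2 * X 3, (X 1) ^ 3 - (X 0) ^ 2 * X 2}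

lemma mon2 (α β : ℕ) :
    (monomial (Finsupp.single 0 α + Finsupp.single 1 β) (1:k) : MvPolynomial (Fin 2) k)
      = X 0 ^ α * X 1 ^ β := by
  rw [X_pow_eq_monomial, X_pow_eq_monomial, monomial_mul, one_mul]

lemma aeval_mon (m : Fin 4 →₀ ℕ) :
    aeval (vv k) (monomial m (1:k)) = monomial (ee m) 1 := by
  rw [aeval_monomial, map_one, one_mul, ee, mon2]
  rw [Finsupp.prod_fintype]
  · simp [Fin.prod_univ_four]
    ring
  · intro i; exact pow_zero _

lemma diff_mem (r p p' : Fin 4 →₀ ℕ)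
    (hg : monomial p (1:k) - monomial p' 1 ∈ Sgen k) :
    monomial (r + p) (1:k) - monomial (r + p') 1 ∈ Ideal.span (Sgen k) := by
  have hkey : monomial (r + p) (1:k) - monomial (r + p') 1
      = monomial r 1 * (monomial p 1 - monomial p' 1) := by
    rw [mul_sub, monomial_mul, monomial_mul, one_mul]
  rw [hkey]
  exact Ideal.mul_mem_left _ _ (Ideal.subset_span hg)

lemma gen1 : (X 1 * X 2 - X 0 * X 3 : MvPolynomial (Fin 4) k)
    = monomial (Finsupp.single 1 1 + Finsupp.single 2 1) 1
      - monomial (Finsupp.single 0 1 + Finsupp.single 3 1) 1 := by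
  rw [X, X, X, X, monomial_mul, monomial_mul, one_mul]

lemma gen2 : ((X 2)^3 - X 1 * (X 3)^2 : MvPolynomial (Fin 4) k)
    = monomial (Finsupp.single 2 3) 1
      - monomial (Finsupp.single 1 1 + Finsupp.single 3 2) 1 := by
  rw [X_pow_eq_monomial, X, X_pow_eq_monomial, monomial_mul, one_mul]

lemma gen3 : (X 0 * (X 2)^2 - (X 1)^2 * X 3 : MvPolynomial (Fin 4) k)
    = monomial (Finsupp.single 0 1 + Finsupp.single 2 2) 1
      - monomial (Finsupp.single 1 2 + Finsupp.single 3 1) 1 := by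
  rw [X_pow_eq_monomial, X_pow_eq_monomial, X, X, monomial_mul, monomial_mul]; norm_num

lemma gen4 : ((X 1)^3 - (X 0)^2 * X 2 : MvPolynomial (Fin 4) k)
    = monomial (Finsupp.single 1 3) 1
      - monomial (Finsupp.single 0 2 + Finsupp.single 2 1) 1 := by
  rw [X_pow_eq_monomial, X_pow_eq_monomial, X, monomial_mul, one_mul]

lemma reduce (m : Fin 4 →₀ ℕ) (h : ¬ Std m) :
    ∃ m', (2 * m' 1 + 3 * m' 2 < 2 * m 1 + 3 * m 2) ∧ ee m' = ee m ∧
      monomial m (1:k) - monomial m' 1 ∈ Ideal.span (Sgen k) := by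
  have hcase : (1 ≤ m 1 ∧ 1 ≤ m 2) ∨ 3 ≤ m 2 ∨ 3 ≤ m 1 ∨ (1 ≤ m 0 ∧ 2 ≤ m 2) := by
    unfold Std at h; omega
  rcases hcase with ⟨h1, h2⟩ | h1 | h1 | ⟨h1, h2⟩
  · -- yz → xw
    set p : Fin 4 →₀ ℕ := Finsupp.single 1 1 + Finsupp.single 2 1 with hp
    set p' : Fin 4 →₀ ℕ := Finsupp.single 0 1 + Finsupp.single 3 1 with hp'
    set r : Fin 4 →₀ ℕ := m - p with hr
    have hm : m = r + p := by
      ext j; fin_cases j <;>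
        simp [hr, hp, Finsupp.tsub_apply, Finsupp.single_apply] <;> omega
    refine ⟨r + p', ?_, ?_, ?_⟩
    · simp [hr, hp, hp', Finsupp.tsub_apply, Finsupp.single_apply]; omega
    · rw [ee_eq_iff]
      constructor <;>
        simp [hr, hp, hp', Finsupp.tsub_apply, Finsupp.single_apply] <;> omega
    · rw [hm]
      exact diff_mem k r p p' (by rw [← gen1]; left; rfl)
  · -- z^3 → y w^2
    set p : Fin 4 →₀ ℕ := Finsupp.single 2 3 with hp
    set p' : Fin 4 →₀ ℕ := Finsupp.single 1 1 + Finsupp.single 3 2 with hp'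
    set r : Fin 4 →₀ ℕ := m - p with hr
    have hm : m = r + p := by
      ext j; fin_cases j <;>
        simp [hr, hp, Finsupp.tsub_apply, Finsupp.single_apply] <;> omega
    refine ⟨r + p', ?_, ?_, ?_⟩
    · simp [hr, hp, hp', Finsupp.tsub_apply, Finsupp.single_apply]; omega
    · rw [ee_eq_iff]
      constructor <;>
        simp [hr, hp, hp', Finsupp.tsub_apply, Finsupp.single_apply] <;> omega
    · rw [hm]
      exact diff_mem k r p p' (by rw [← gen2]; right; left; rfl)
  · -- y^3 → x^2 z
    set p : Fin 4 →₀ ℕ := Finsupp.single 1 3 with hp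
    set p' : Fin 4 →₀ ℕ := Finsupp.single 0 2 + Finsupp.single 2 1 with hp'
    set r : Fin 4 →₀ ℕ := m - p with hr
    have hm : m = r + p := by
      ext j; fin_cases j <;>
        simp [hr, hp, Finsupp.tsub_apply, Finsupp.single_apply] <;> omega
    refine ⟨r + p', ?_, ?_, ?_⟩
    · simp [hr, hp, hp', Finsupp.tsub_apply, Finsupp.single_apply]; omega
    · rw [ee_eq_iff]
      constructor <;>
        simp [hr, hp, hp', Finsupp.tsub_apply, Finsupp.single_apply] <;> omega
    · rw [hm]
      exact diff_mem k r p p' (by rw [← gen4]; right; right; right; rfl)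
  · -- x z^2 → y^2 w
    set p : Fin 4 →₀ ℕ := Finsupp.single 0 1 + Finsupp.single 2 2 with hp
    set p' : Fin 4 →₀ ℕ := Finsupp.single 1 2 + Finsupp.single 3 1 with hp'
    set r : Fin 4 →₀ ℕ := m - p with hr
    have hm : m = r + p := by
      ext j; fin_cases j <;>
        simp [hr, hp, Finsupp.tsub_apply, Finsupp.single_apply] <;> omega
    refine ⟨r + p', ?_, ?_, ?_⟩
    · simp [hr, hp, hp', Finsupp.tsub_apply, Finsupp.single_apply]; omega
    · rw [ee_eq_iff]
      constructor <;>
        simp [hr, hp, hp', Finsupp.tsub_apply, Finsupp.single_apply] <;> omega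
    · rw [hm]
      exact diff_mem k r p p' (by rw [← gen3]; right; right; left; rfl)

lemma aeval_mon' (m : Fin 4 →₀ ℕ) (c : k) :
    aeval (vv k) (monomial m c) = monomial (ee m) c := by
  rw [← mul_one c, ← C_mul_monomial, map_mul, aeval_C, aeval_mon, algebraMap_eq, C_mul_monomial, mul_one]

lemma std_inj_zero (f : MvPolynomial (Fin 4) k)
    (hstd : ∀ m ∈ f.support, Std m) (hf : aeval (vv k) f = 0) : f = 0 := by
  by_contra hne
  obtain ⟨m₀, hm₀⟩ := (MvPolynomial.support_nonempty.mpr hne)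
  have hval : coeff (ee m₀) (aeval (vv k) f) = coeff m₀ f := by
    conv_lhs => rw [f.as_sum, map_sum]
    rw [coeff_sum]
    rw [Finset.sum_eq_single_of_mem m₀ hm₀]
    · rw [aeval_mon', coeff_monomial, if_pos rfl]
    · intro b hb hbne
      rw [aeval_mon', coeff_monomial, if_neg]
      intro h
      exact hbne (ee_inj (hstd b hb) (hstd m₀ hm₀) h)
  rw [hf, coeff_zero] at hval
  exact (mem_support_iff.mp hm₀) hval.symm

lemma ker_sub (f : MvPolynomial (Fin 4) k) (hf : aeval (vv k) f = 0) :
    f ∈ Ideal.span (Sgen k) := by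
  suffices H : ∀ n : ℕ, ∀ f : MvPolynomial (Fin 4) k,
      (∑ m ∈ f.support, (2 * m 1 + 3 * m 2)) ≤ n → aeval (vv k) f = 0 →
      f ∈ Ideal.span (Sgen k) by
    exact H _ f le_rfl hf
  intro n
  induction n using Nat.strong_induction_on with
  | _ n IH =>
    intro f hμ hf
    by_cases hstd : ∀ m ∈ f.support, Std m
    · rw [std_inj_zero k f hstd hf]; exact zero_mem _
    · push_neg at hstd
      obtain ⟨m₀, hm₀s, hm₀⟩ := hstd
      obtain ⟨m', hw, hee, hmem⟩ := reduce k m₀ hm₀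
      set c := coeff m₀ f with hc
      set q : MvPolynomial (Fin 4) k := C c * (monomial m₀ 1 - monomial m' 1) with hq
      have hqI : q ∈ Ideal.span (Sgen k) := Ideal.mul_mem_left _ _ hmem
      have hq0 : aeval (vv k) q = 0 := by
        rw [hq, map_mul, map_sub, aeval_mon, aeval_mon, hee, sub_self, mul_zero]
      have hfq : aeval (vv k) (f - q) = 0 := by rw [map_sub, hf, hq0, sub_zero]
      have hne : m' ≠ m₀ := by
        intro h; rw [h] at hw; omega
      have hsupp : (f - q).support ⊆ insert m' (f.support.erase m₀) := by
        intro m hm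
        rw [mem_support_iff] at hm
        have hcoeff : coeff m (f - q) = coeff m f
            - c * ((if m₀ = m then (1:k) else 0) - (if m' = m then 1 else 0)) := by
          rw [coeff_sub, hq, coeff_C_mul, coeff_sub, coeff_monomial, coeff_monomial]
        rcases eq_or_ne m m' with h1 | h1
        · exact Finset.mem_insert.mpr (Or.inl h1)
        rcases eq_or_ne m m₀ with h2 | h2
        · exfalso
          apply hm
          subst h2
          rw [hcoeff, if_pos rfl, if_neg hne, ← hc]
          ring
        · refine Finset.mem_insert.mpr (Or.inr (Finset.mem_erase.mpr ⟨h2, ?_⟩))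
          rw [mem_support_iff]
          rw [hcoeff, if_neg (Ne.symm h2), if_neg (Ne.symm h1)] at hm
          simpa using hm
      have hμ' : (∑ m ∈ (f - q).support, (2 * m 1 + 3 * m 2)) < n := by
        have b1 : (∑ m ∈ (f - q).support, (2 * m 1 + 3 * m 2))
            ≤ ∑ m ∈ insert m' (f.support.erase m₀), (2 * m 1 + 3 * m 2) :=
          Finset.sum_le_sum_of_subset hsupp
        have b2 : (∑ m ∈ insert m' (f.support.erase m₀), (2 * m 1 + 3 * m 2))
            ≤ (2 * m' 1 + 3 * m' 2) + ∑ m ∈ f.support.erase m₀, (2 * m 1 + 3 * m 2) := by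
          by_cases hmm' : m' ∈ f.support.erase m₀
          · rw [Finset.insert_eq_self.mpr hmm']; exact Nat.le_add_left _ _
          · rw [Finset.sum_insert hmm']
        have b3 : (2 * m₀ 1 + 3 * m₀ 2) + ∑ m ∈ f.support.erase m₀, (2 * m 1 + 3 * m 2)
            = ∑ m ∈ f.support, (2 * m 1 + 3 * m 2) :=
          Finset.add_sum_erase _ (fun m => 2 * m 1 + 3 * m 2) hm₀s
        omega
      have hIH := IH _ hμ' (f - q) le_rfl hfq
      have hres : f = (f - q) + q := by ring
      rw [hres]
      exact Ideal.add_mem _ hIH hqI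

/-- The kernel of `k[x,y,z,w] → k[s,t]`, `x ↦ s⁴, y ↦ s³t, z ↦ st³, w ↦ t⁴`, is the ideal
`(yz − xw, z³ − yw², xz² − y²w, y³ − x²z)`. -/
theorem stmt_13 (k : Type) [Field k] :
    RingHom.ker (MvPolynomial.aeval
        (![(X 0) ^ 4, (X 0) ^ 3 * X 1, X 0 * (X 1) ^ 3, (X 1) ^ 4] :
          Fin 4 → MvPolynomial (Fin 2) k) :
        MvPolynomial (Fin 4) k →ₐ[k] MvPolynomial (Fin 2) k).toRingHom =
      Ideal.span {X 1 * X 2 - X 0 * X 3, (X 2) ^ 3 - X 1 * (X 3) ^ 2,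
        X 0 * (X 2) ^ 2 - (X 1) ^ 2 * X 3, (X 1) ^ 3 - (X 0) ^ 2 * X 2} := by
  refine le_antisymm ?_ ?_
  · intro f hf
    exact ker_sub k f ((RingHom.mem_ker).mp hf)
  · rw [Ideal.span_le]
    intro g hg
    simp only [Set.mem_insert_iff, Set.mem_singleton_iff] at hg
    rcases hg with rfl | rfl | rfl | rfl <;>
      · rw [SetLike.mem_coe, RingHom.mem_ker]
        show aeval _ _ = 0
        simp
        ring
end
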